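/- Let Φ ∈ C¹([0,∞)) be a non-negative convex function with Φ(0)=Φ'(0)=0 and let (n_k)_{k≥0} be a non-decreasing sequence of integers with n₀=1, n₁≥2, and n_k → ∞ as k → ∞. Then for every f ∈ L¹(Ω,μ) and every k ≥ 1: ∫_{{|f|<n_k}} Φ(|f|) dμ ≤ Φ'(1) ∫_Ω |f| dμ + Σ_{j=0}^{k−1} (Φ'(n_{j+1}) − Φ'(n_j)) ∫_{{|f|≥n_j}} |f| dμ. -/

import Mathlib

open MeasureTheory Filter Topology

private lemma phi_deriv_mono (Φ Φ' : ℝ → ℝ)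
    (hderiv : ∀ r ∈ Set.Ici (0:ℝ), HasDerivWithinAt Φ (Φ' r) (Set.Ici 0) r)
    (hconv : ConvexOn ℝ (Set.Ici 0) Φ) :
    ∀ a b : ℝ, 0 ≤ a → a ≤ b → Φ' a ≤ Φ' b := by
  intro a b ha hab
  rcases eq_or_lt_of_le hab with rfl | hlt
  · exact le_rfl
  · have hb : (0:ℝ) ≤ b := ha.trans hab
    have h1 := hconv.le_slope_of_hasDerivWithinAt ha hb hlt (hderiv a ha)
    have h2 := hconv.slope_le_of_hasDerivWithinAt ha hb hlt (hderiv b hb)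
    exact h1.trans h2

private lemma phi_self_bound (Φ Φ' : ℝ → ℝ)
    (hderiv : ∀ r ∈ Set.Ici (0:ℝ), HasDerivWithinAt Φ (Φ' r) (Set.Ici 0) r)
    (hconv : ConvexOn ℝ (Set.Ici 0) Φ) (hΦ0 : Φ 0 = 0) :
    ∀ t : ℝ, 0 ≤ t → Φ t ≤ t * Φ' t := by
  intro t ht
  rcases eq_or_lt_of_le ht with rfl | hlt
  · simp [hΦ0]
  · have h := hconv.slope_le_of_hasDerivWithinAt (Set.mem_Ici.mpr le_rfl) ht hlt (hderiv t ht)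
    rw [slope_def_field] at h
    rw [hΦ0, sub_zero, sub_zero, div_le_iff₀ hlt] at h
    linarith

private lemma phi_pointwise (Φ Φ' : ℝ → ℝ)
    (hderiv : ∀ r ∈ Set.Ici (0:ℝ), HasDerivWithinAt Φ (Φ' r) (Set.Ici 0) r)
    (hconv : ConvexOn ℝ (Set.Ici 0) Φ)
    (hΦ0 : Φ 0 = 0) (hΦ'0 : Φ' 0 = 0)
    (n : ℕ → ℕ) (hmono : Monotone n) (hn0 : n 0 = 1) :
    ∀ (k : ℕ) (t : ℝ), 0 ≤ t → t < n k →
      Φ t ≤ Φ' 1 * t + ∑ j ∈ Finset.range k,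
        (Φ' (n (j+1)) - Φ' (n j)) * (if (n j : ℝ) ≤ t then t else 0) := by
  have mono' := phi_deriv_mono Φ Φ' hderiv hconv
  have selfb := phi_self_bound Φ Φ' hderiv hconv hΦ0
  intro k
  induction k with
  | zero =>
      intro t ht htk
      rw [hn0] at htk
      push_cast at htk
      have h1 : Φ t ≤ t * Φ' t := selfb t ht
      have h2 : Φ' t ≤ Φ' 1 := mono' t 1 ht htk.le
      have := mul_le_mul_of_nonneg_left h2 ht
      simp only [Finset.range_zero, Finset.sum_empty, add_zero]
      nlinarith
  | succ k ih =>
      intro t ht htk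
      by_cases hc : (n k : ℝ) ≤ t
      · -- all indicators up to k are on
        have hall : ∀ j ∈ Finset.range (k+1),
            (Φ' (n (j+1)) - Φ' (n j)) * (if (n j : ℝ) ≤ t then t else 0)
              = (Φ' (n (j+1)) - Φ' (n j)) * t := by
          intro j hj
          have hjk : j ≤ k := Nat.lt_succ_iff.mp (Finset.mem_range.mp hj)
          have : (n j : ℝ) ≤ (n k : ℝ) := by exact_mod_cast hmono hjk
          rw [if_pos (this.trans hc)]
        rw [Finset.sum_congr rfl hall, ← Finset.sum_mul,
          Finset.sum_range_sub (fun j => Φ' (n j)), hn0]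
        have h1 : Φ t ≤ t * Φ' t := selfb t ht
        have h2 : Φ' t ≤ Φ' (n (k+1)) := mono' t _ ht (le_of_lt htk)
        have := mul_le_mul_of_nonneg_left h2 ht
        push_cast
        nlinarith
      · -- t < n k, use induction hypothesis
        push_neg at hc
        have hIH := ih t ht hc
        rw [Finset.sum_range_succ]
        have hck : 0 ≤ Φ' (n (k+1)) - Φ' (n k) := by
          have : (n k : ℝ) ≤ (n (k+1) : ℝ) := by
            exact_mod_cast hmono (Nat.le_succ k)
          have := mono' (n k) (n (k+1)) (by positivity) this
          linarith
        have hterm : 0 ≤ (Φ' (n (k+1)) - Φ' (n k)) * (if (n k : ℝ) ≤ t then t else 0) := by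
          apply mul_nonneg hck
          split <;> simp [ht]
        linarith

/-- Let `Φ ∈ C¹([0,∞))` be a non-negative convex function with
`Φ(0) = Φ'(0) = 0`, and let `(n_k)` be a non-decreasing sequence of integers with `n₀ = 1`,
`n₁ ≥ 2`, `n_k → ∞`. Then for every `f ∈ L¹(Ω, μ)` and every `k ≥ 1`,
`∫_{{|f| < n_k}} Φ(|f|) dμ ≤ Φ'(1) ∫_Ω |f| dμ
  + Σ_{j=0}^{k−1} (Φ'(n_{j+1}) − Φ'(n_j)) ∫_{{|f| ≥ n_j}} |f| dμ`. -/
theorem tail_sum_estimate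
    {Ω : Type*} [MeasurableSpace Ω] (μ : Measure Ω) [SigmaFinite μ]
    (Φ Φ' : ℝ → ℝ)
    (hderiv : ∀ r ∈ Set.Ici (0:ℝ), HasDerivWithinAt Φ (Φ' r) (Set.Ici 0) r)
    (hcont : ContinuousOn Φ' (Set.Ici 0))
    (hconv : ConvexOn ℝ (Set.Ici 0) Φ)
    (hnonneg : ∀ r ∈ Set.Ici (0:ℝ), 0 ≤ Φ r)
    (hΦ0 : Φ 0 = 0) (hΦ'0 : Φ' 0 = 0)
    (n : ℕ → ℕ) (hmono : Monotone n) (hn0 : n 0 = 1) (hn1 : 2 ≤ n 1)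
    (hlim : Tendsto n atTop atTop)
    (f : Ω → ℝ) (hf : Integrable f μ) (k : ℕ) (hk : 1 ≤ k) :
    ∫ x in {y | |f y| < (n k : ℝ)}, Φ |f x| ∂μ ≤
      Φ' 1 * ∫ x, |f x| ∂μ +
        ∑ j ∈ Finset.range k,
          (Φ' (n (j+1)) - Φ' (n j)) * ∫ x in {y | (n j : ℝ) ≤ |f y|}, |f x| ∂μ := by
  classical
  have mono' := phi_deriv_mono Φ Φ' hderiv hconv
  -- measurable representative
  set g : Ω → ℝ := hf.1.mk f with hg_def
  have hfg : f =ᵐ[μ] g := hf.1.ae_eq_mk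
  have hmg : Measurable g := hf.1.stronglyMeasurable_mk.measurable
  have hg_int : Integrable g μ := hf.congr hfg
  have hgabs : Integrable (fun x => |g x|) μ := hg_int.abs
  set A : Set Ω := {y | |g y| < (n k : ℝ)} with hA_def
  set B : ℕ → Set Ω := fun j => {y | (n j : ℝ) ≤ |g y|} with hB_def
  set c : ℕ → ℝ := fun j => Φ' (n (j+1)) - Φ' (n j) with hc_def
  have hAmeas : MeasurableSet A := measurableSet_lt hmg.abs measurable_const
  have hBmeas : ∀ j, MeasurableSet (B j) := fun j =>
    measurableSet_le measurable_const hmg.abs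
  have hind_int : ∀ j, Integrable ((B j).indicator fun y => |g y|) μ := fun j =>
    hgabs.indicator (hBmeas j)
  set F : Ω → ℝ := fun x =>
    Φ' 1 * |g x| + ∑ j ∈ Finset.range k, c j * (B j).indicator (fun y => |g y|) x with hF_def
  have hF_int : Integrable F μ :=
    (hgabs.const_mul _).add
      (integrable_finset_sum _ fun j _ => (hind_int j).const_mul _)
  have hΦ'1 : 0 ≤ Φ' 1 := by
    have := mono' 0 1 le_rfl zero_le_one; rw [hΦ'0] at this; exact this
  have hcnn : ∀ j, 0 ≤ c j := by
    intro j
    have h1 : (n j : ℝ) ≤ (n (j+1) : ℝ) := by exact_mod_cast hmono (Nat.le_succ j)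
    have := mono' (n j) (n (j+1)) (by positivity) h1
    simp only [hc_def]; linarith
  -- pointwise bound on A
  have hpt : ∀ x ∈ A, Φ |g x| ≤ F x := by
    intro x hx
    have := phi_pointwise Φ Φ' hderiv hconv hΦ0 hΦ'0 n hmono hn0 k |g x|
      (abs_nonneg _) hx
    simp only [hF_def, Set.indicator_apply, hB_def, Set.mem_setOf_eq]
    exact this
  -- measurability of Φ ∘ |g|
  have hΦcont : ContinuousOn Φ (Set.Ici 0) := fun r hr => (hderiv r hr).continuousWithinAt
  have hΨ : Continuous (fun t : ℝ => Φ (max t 0)) :=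
    hΦcont.comp_continuous (continuous_id.max continuous_const)
      (fun x => le_max_right x 0)
  have hΦg_meas : AEStronglyMeasurable (fun x => Φ |g x|) μ := by
    have : (fun x => Φ |g x|) = fun x => Φ (max |g x| 0) := by
      funext x; rw [max_eq_left (abs_nonneg _)]
    rw [this]
    exact (hΨ.measurable.comp hmg.abs).aestronglyMeasurable
  have hΦg_intOn : IntegrableOn (fun x => Φ |g x|) A μ := by
    refine Integrable.mono' hF_int.integrableOn hΦg_meas.restrict ?_
    refine (ae_restrict_iff' hAmeas).2 (ae_of_all _ fun x hx => ?_)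
    rw [Real.norm_eq_abs, abs_of_nonneg (hnonneg _ (Set.mem_Ici.mpr (abs_nonneg _)))]
    exact hpt x hx
  have step1 : ∫ x in A, Φ |g x| ∂μ ≤ ∫ x in A, F x ∂μ :=
    setIntegral_mono_on hΦg_intOn hF_int.integrableOn hAmeas hpt
  have step2 : ∫ x in A, F x ∂μ
      = Φ' 1 * ∫ x in A, |g x| ∂μ
        + ∑ j ∈ Finset.range k, c j * ∫ x in A, (B j).indicator (fun y => |g y|) x ∂μ := by
    rw [integral_add ((hgabs.const_mul _).restrict)
        ((integrable_finset_sum _ fun j _ => (hind_int j).const_mul _).restrict),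
      integral_const_mul, integral_finset_sum _ (fun j _ => ((hind_int j).const_mul _).restrict)]
    simp_rw [integral_const_mul]
  have hAle : ∫ x in A, |g x| ∂μ ≤ ∫ x, |g x| ∂μ :=
    setIntegral_le_integral hgabs (ae_of_all _ fun x => abs_nonneg _)
  have hBle : ∀ j, ∫ x in A, (B j).indicator (fun y => |g y|) x ∂μ
      ≤ ∫ x in B j, |g x| ∂μ := by
    intro j
    calc ∫ x in A, (B j).indicator (fun y => |g y|) x ∂μ
        ≤ ∫ x, (B j).indicator (fun y => |g y|) x ∂μ :=
          setIntegral_le_integral (hind_int j)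
            (ae_of_all _ fun x => Set.indicator_nonneg (fun y _ => abs_nonneg _) x)
      _ = ∫ x in B j, |g x| ∂μ := integral_indicator (hBmeas j)
  have step3 : ∫ x in A, F x ∂μ
      ≤ Φ' 1 * ∫ x, |g x| ∂μ + ∑ j ∈ Finset.range k, c j * ∫ x in B j, |g x| ∂μ := by
    rw [step2]
    gcongr with j hj
    all_goals first
      | exact hΦ'1
      | exact hcnn j
      | exact hAle
      | exact hBle j
  -- transfer to f
  have hsetA : {y | |f y| < (n k : ℝ)} =ᵐ[μ] A := by
    refine Filter.eventuallyEq_set.2 (hfg.mono fun y hy => ?_)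
    simp [hA_def, Set.mem_setOf_eq, hy]
  have hsetB : ∀ j, {y | (n j : ℝ) ≤ |f y|} =ᵐ[μ] B j := by
    intro j
    refine Filter.eventuallyEq_set.2 (hfg.mono fun y hy => ?_)
    simp [hB_def, Set.mem_setOf_eq, hy]
  have hLHS : ∫ x in {y | |f y| < (n k : ℝ)}, Φ |f x| ∂μ = ∫ x in A, Φ |g x| ∂μ := by
    rw [Measure.restrict_congr_set hsetA]
    exact integral_congr_ae (ae_restrict_of_ae (hfg.mono fun x hx => by simp only [hx]))
  have habs : ∫ x, |f x| ∂μ = ∫ x, |g x| ∂μ :=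
    integral_congr_ae (hfg.mono fun x hx => by simp only [hx])
  have hBeq : ∀ j, ∫ x in {y | (n j : ℝ) ≤ |f y|}, |f x| ∂μ = ∫ x in B j, |g x| ∂μ := by
    intro j
    rw [Measure.restrict_congr_set (hsetB j)]
    exact integral_congr_ae (ae_restrict_of_ae (hfg.mono fun x hx => by simp only [hx]))
  rw [hLHS, habs]
  calc ∫ x in A, Φ |g x| ∂μ ≤ ∫ x in A, F x ∂μ := step1
    _ ≤ Φ' 1 * ∫ x, |g x| ∂μ + ∑ j ∈ Finset.range k, c j * ∫ x in B j, |g x| ∂μ := step3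
    _ = Φ' 1 * ∫ x, |g x| ∂μ + ∑ j ∈ Finset.range k,
          (Φ' (n (j+1)) - Φ' (n j)) * ∫ x in {y | (n j : ℝ) ≤ |f y|}, |f x| ∂μ := by
        congr 1
        exact Finset.sum_congr rfl fun j _ => by rw [hBeq j]
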